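/- Let α be an irrational number not equivalent to (1+√5)/2 and not equivalent to (1+√17)/2. If in its continued fraction expansion aₙ ≤ 4 for all sufficiently large n and aₙ = 4 for infinitely many n, then 𝔨(α) ≤ 4/(3 + √2). -/

import Mathlib

open Filter

/-- The tails `αₙ = [aₙ; aₙ₊₁, …]` of the continued fraction of `α`. -/
noncomputable def cfTail (α : ℝ) : ℕ → ℝ
  | 0 => α
  | n + 1 => (Int.fract (cfTail α n))⁻¹

/-- The partial quotients `aₙ` of the continued fraction of `α`. -/
noncomputable def cfDigit (α : ℝ) (n : ℕ) : ℤ := ⌊cfTail α n⌋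

/-- Value `[a; b, c, …]` of a finite continued fraction given by a list. -/
noncomputable def finCF : List ℤ → ℝ
  | [] => 0
  | a :: l => (a : ℝ) + (finCF l)⁻¹

/-- `α*ₙ = [0; aₙ, aₙ₋₁, …, a₁]`. -/
noncomputable def cfStar (α : ℝ) (n : ℕ) : ℝ :=
  (finCF (((List.range' 1 n).reverse).map (cfDigit α)))⁻¹

/-- Numerators `pₙ` of the convergents of `α`. -/
noncomputable def cfNum (α : ℝ) : ℕ → ℤ
  | 0 => cfDigit α 0
  | 1 => cfDigit α 1 * cfDigit α 0 + 1
  | n + 2 => cfDigit α (n + 2) * cfNum α (n + 1) + cfNum α n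

/-- Denominators `qₙ` of the convergents of `α`. -/
noncomputable def cfDen (α : ℝ) : ℕ → ℤ
  | 0 => 1
  | 1 => cfDigit α 1
  | n + 2 => cfDigit α (n + 2) * cfDen α (n + 1) + cfDen α n

/-- The irrationality measure function `ψ_α^[2]` for "second best" approximations. -/
noncomputable def psi2 (α : ℝ) (t : ℝ) : ℝ :=
  sInf { x : ℝ | ∃ p q : ℤ, 1 ≤ q ∧ (q : ℝ) ≤ t ∧
    (∀ n : ℕ, (p, q) ≠ (cfNum α n, cfDen α n)) ∧ x = |(q : ℝ) * α - (p : ℝ)| }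

/-- The Diophantine constant `𝔨(α) = liminf_{t → ∞} t · ψ_α^[2](t)`. -/
noncomputable def kConst (α : ℝ) : ℝ := liminf (fun t : ℝ => t * psi2 α t) atTop

/-- Two numbers are equivalent if the tails of their continued fraction expansions
coincide: `a_{n+k} = b_{m+k}` for all `k ≥ 1`, for some positive integers `m`, `n`. -/
def CFEquiv (α β : ℝ) : Prop :=
  ∃ n m : ℕ, 0 < n ∧ 0 < m ∧ ∀ k : ℕ, 0 < k → cfDigit α (n + k) = cfDigit β (m + k)

/-- The spectrum `𝕃₂` of values of `𝔨`. -/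
def L2 : Set ℝ := { l : ℝ | ∃ α : ℝ, Irrational α ∧ l = kConst α }

/-- `κ¹ₙ(α) = (1 + α*ₙ₋₁)(αₙ − 1)/(αₙ + α*ₙ₋₁)`. -/
noncomputable def kappa1 (α : ℝ) (n : ℕ) : ℝ :=
  (1 + cfStar α (n - 1)) * (cfTail α n - 1) / (cfTail α n + cfStar α (n - 1))

/-- `κ²ₙ(α) = (1 − α*ₙ)(αₙ₊₁ + 1)/(αₙ₊₁ + α*ₙ)`. -/
noncomputable def kappa2 (α : ℝ) (n : ℕ) : ℝ :=
  (1 - cfStar α n) * (cfTail α (n + 1) + 1) / (cfTail α (n + 1) + cfStar α n)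

/-- `κ⁴ₙ(α) = 4/(αₙ + α*ₙ₋₁)`. -/
noncomputable def kappa4 (α : ℝ) (n : ℕ) : ℝ :=
  4 / (cfTail α n + cfStar α (n - 1))

section lems
variable {α : ℝ}

theorem tail_irr (hα : Irrational α) (n : ℕ) : Irrational (cfTail α n) := by
  induction n with
  | zero => exact hα
  | succ n ih =>
    have : Irrational (Int.fract (cfTail α n)) := by
      have : Int.fract (cfTail α n) = cfTail α n - ⌊cfTail α n⌋ := rfl
      rw [this]; exact ih.sub_intCast _
    exact this.inv

theorem fract_pos (hα : Irrational α) (n : ℕ) : 0 < Int.fract (cfTail α n) := by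
  rcases lt_or_eq_of_le (Int.fract_nonneg (cfTail α n)) with h | h
  · exact h
  · exfalso
    have : Irrational (Int.fract (cfTail α n)) := by
      have : Int.fract (cfTail α n) = cfTail α n - ⌊cfTail α n⌋ := rfl
      rw [this]; exact (tail_irr hα n).sub_intCast _
    exact this.ne_int 0 (by exact_mod_cast h.symm)

theorem tail_one_lt (hα : Irrational α) (n : ℕ) : 1 < cfTail α (n + 1) := by
  show 1 < (Int.fract (cfTail α n))⁻¹
  exact (one_lt_inv₀ (fract_pos hα n)).2 (Int.fract_lt_one _)

theorem tail_pos (hα : Irrational α) (n : ℕ) : 0 < cfTail α (n + 1) :=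
  lt_trans one_pos (tail_one_lt hα n)

theorem tail_rec (hα : Irrational α) (n : ℕ) :
    cfTail α n = cfDigit α n + (cfTail α (n + 1))⁻¹ := by
  show cfTail α n = _ + ((Int.fract (cfTail α n))⁻¹)⁻¹
  rw [inv_inv, cfDigit]
  have : Int.fract (cfTail α n) = cfTail α n - ⌊cfTail α n⌋ := rfl
  rw [this]; ring

theorem digit_one_le (hα : Irrational α) (n : ℕ) : 1 ≤ cfDigit α (n + 1) := by
  rw [cfDigit]
  exact Int.le_floor.mpr (by exact_mod_cast (tail_one_lt hα n).le)

theorem den_one_le (hα : Irrational α) : ∀ n, 1 ≤ cfDen α n ∧ cfDen α n ≤ cfDen α (n + 1) := by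
  intro n
  induction n using Nat.strong_induction_on with
  | _ n ih =>
    match n with
    | 0 => exact ⟨le_refl 1, by simpa [cfDen] using digit_one_le hα 0⟩
    | 1 =>
      have h0 := digit_one_le hα 0
      have h1 := digit_one_le hα 1
      refine ⟨by simpa [cfDen] using h0, ?_⟩
      show cfDigit α 1 ≤ cfDigit α 2 * cfDigit α 1 + 1
      nlinarith
    | (n + 2) =>
      obtain ⟨ha, hb⟩ := ih (n + 1) (by omega)
      obtain ⟨ha0, _⟩ := ih n (by omega)
      have hd := digit_one_le hα (n + 1)
      have hd2 := digit_one_le hα (n + 2)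
      have key : 1 ≤ cfDigit α (n+2) * cfDen α (n+1) + cfDen α n := by nlinarith
      refine ⟨key, ?_⟩
      show cfDigit α (n+2) * cfDen α (n+1) + cfDen α n ≤
          cfDigit α (n+2+1) * (cfDigit α (n+2) * cfDen α (n+1) + cfDen α n) + cfDen α (n+1)
      nlinarith [mul_le_mul_of_nonneg_right hd2 (by linarith : (0:ℤ) ≤ cfDigit α (n+2) * cfDen α (n+1) + cfDen α n)]

theorem den_ge (hα : Irrational α) (n : ℕ) : (n : ℤ) ≤ cfDen α (n + 1) := by
  induction n with
  | zero => simpa using le_trans (le_refl 0) (by linarith [(den_one_le hα 1).1])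
  | succ n ih =>
    have h1 := (den_one_le hα n).1
    have hd := digit_one_le hα (n + 1)
    have : cfDen α (n + 1 + 1) = cfDigit α (n + 1 + 1) * cfDen α (n + 1) + cfDen α n := rfl
    rw [this]
    push_cast
    nlinarith [mul_le_mul_of_nonneg_right hd (by linarith : (0:ℤ) ≤ cfDen α (n+1))]

theorem det_eq (hα : Irrational α) : ∀ n,
    cfNum α (n + 1) * cfDen α n - cfNum α n * cfDen α (n + 1) = (-1) ^ n := by
  intro n
  induction n with
  | zero => simp [cfNum, cfDen]; ring
  | succ n ih =>
    show (cfDigit α (n+2) * cfNum α (n+1) + cfNum α n) * cfDen α (n+1)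
        - cfNum α (n+1) * (cfDigit α (n+2) * cfDen α (n+1) + cfDen α n) = _
    have : (-1:ℤ)^(n+1) = -(-1)^n := by ring
    rw [this]; linarith [ih, (by ring : (cfDigit α (n+2) * cfNum α (n+1) + cfNum α n) * cfDen α (n+1)
        - cfNum α (n+1) * (cfDigit α (n+2) * cfDen α (n+1) + cfDen α n)
        = -(cfNum α (n+1) * cfDen α n - cfNum α n * cfDen α (n+1)))]

end lems


theorem cf_identity (hα : Irrational α) (n : ℕ) :
    α * (cfTail α (n + 2) * (cfDen α (n + 1) : ℝ) + (cfDen α n : ℝ))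
      = cfTail α (n + 2) * (cfNum α (n + 1) : ℝ) + (cfNum α n : ℝ) := by
  induction n with
  | zero =>
    have e0 : α = (cfDigit α 0 : ℝ) + (cfTail α 1)⁻¹ := tail_rec hα 0
    have e1 : cfTail α 1 = (cfDigit α 1 : ℝ) + (cfTail α 2)⁻¹ := tail_rec hα 1
    have ht1 : cfTail α 1 ≠ 0 := ne_of_gt (tail_pos hα 0)
    have ht2 : cfTail α 2 ≠ 0 := ne_of_gt (tail_pos hα 1)
    have hi1 : (cfTail α 1)⁻¹ * cfTail α 1 = 1 := inv_mul_cancel₀ ht1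
    have hi2 : (cfTail α 2)⁻¹ * cfTail α 2 = 1 := inv_mul_cancel₀ ht2
    have E0 : α * cfTail α 1 = (cfDigit α 0 : ℝ) * cfTail α 1 + 1 := by
      linear_combination cfTail α 1 * e0 + hi1
    have E1 : cfTail α 1 * cfTail α 2 = (cfDigit α 1 : ℝ) * cfTail α 2 + 1 := by
      linear_combination cfTail α 2 * e1 + hi2
    have eden1 : (cfDen α 1 : ℝ) = (cfDigit α 1 : ℝ) := by norm_cast
    have eden0 : (cfDen α 0 : ℝ) = 1 := by norm_cast
    have enum1 : (cfNum α 1 : ℝ) = (cfDigit α 1 : ℝ) * (cfDigit α 0 : ℝ) + 1 := by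
      push_cast [show cfNum α 1 = cfDigit α 1 * cfDigit α 0 + 1 from rfl]; ring
    have enum0 : (cfNum α 0 : ℝ) = (cfDigit α 0 : ℝ) := by norm_cast
    rw [eden1, eden0, enum1, enum0]
    apply mul_left_cancel₀ ht1
    linear_combination (cfTail α 2 * (cfDigit α 1 : ℝ) + 1) * E0 - E1
  | succ n ih =>
    have eq1 : cfTail α (n + 2) = (cfDigit α (n + 2) : ℝ) + (cfTail α (n + 3))⁻¹ :=
      tail_rec hα (n + 2)
    have ht : cfTail α (n + 3) ≠ 0 := ne_of_gt (tail_pos hα (n + 2))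
    have hi : (cfTail α (n + 3))⁻¹ * cfTail α (n + 3) = 1 := inv_mul_cancel₀ ht
    have eden : (cfDen α (n + 2) : ℝ)
        = (cfDigit α (n + 2) : ℝ) * cfDen α (n + 1) + cfDen α n := by
      push_cast [show cfDen α (n+2) = cfDigit α (n + 2) * cfDen α (n + 1) + cfDen α n from rfl]
      ring
    have enum : (cfNum α (n + 2) : ℝ)
        = (cfDigit α (n + 2) : ℝ) * cfNum α (n + 1) + cfNum α n := by
      push_cast [show cfNum α (n+2) = cfDigit α (n + 2) * cfNum α (n + 1) + cfNum α n from rfl]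
      ring
    rw [eq1] at ih
    show α * (cfTail α (n + 3) * (cfDen α (n + 2) : ℝ) + (cfDen α (n + 1) : ℝ))
      = cfTail α (n + 3) * (cfNum α (n + 2) : ℝ) + (cfNum α (n + 1) : ℝ)
    rw [eden, enum]
    linear_combination cfTail α (n + 3) * ih
      + ((cfNum α (n + 1) : ℝ) - α * (cfDen α (n + 1) : ℝ)) * hi

theorem psi_formula (hα : Irrational α) (n : ℕ) :
    |(cfDen α (n+1) : ℝ) * α - (cfNum α (n+1) : ℝ)|
      = (cfTail α (n + 2) * (cfDen α (n + 1) : ℝ) + (cfDen α n : ℝ))⁻¹ := by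
  set D : ℝ := cfTail α (n + 2) * (cfDen α (n + 1) : ℝ) + (cfDen α n : ℝ) with hD
  have hq1 : (1:ℝ) ≤ (cfDen α (n+1) : ℝ) := by exact_mod_cast (den_one_le hα (n+1)).1
  have hq0 : (1:ℝ) ≤ (cfDen α n : ℝ) := by exact_mod_cast (den_one_le hα n).1
  have hDpos : 0 < D := by
    have := tail_one_lt hα (n + 1)
    nlinarith
  have hid := cf_identity hα n
  have hdet : (cfNum α (n + 1) : ℝ) * cfDen α n - cfNum α n * cfDen α (n + 1) = (-1:ℝ)^n := by
    exact_mod_cast congrArg (Int.cast : ℤ → ℝ) (det_eq hα n)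
  have key : ((cfDen α (n+1) : ℝ) * α - cfNum α (n+1)) * D = -(-1:ℝ)^n := by
    have : (cfDen α (n+1) : ℝ) * (α * D) - cfNum α (n+1) * D = -(-1:ℝ)^n := by
      rw [hid, hD]
      nlinarith [hdet]
    nlinarith [this]
  have habs : |(cfDen α (n+1) : ℝ) * α - cfNum α (n+1)| * D = 1 := by
    have := abs_mul ((cfDen α (n+1) : ℝ) * α - cfNum α (n+1)) D
    rw [key] at this
    rw [abs_of_pos hDpos] at this
    simp [abs_neg, abs_pow] at this
    linarith [this]
  field_simp
  linarith [habs]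


theorem double_not_convergent (hα : Irrational α) (n m : ℕ) :
    (2 * cfNum α (n+1), 2 * cfDen α (n+1)) ≠ (cfNum α m, cfDen α m) := by
  intro h
  have hp : 2 * cfNum α (n+1) = cfNum α m := (Prod.mk.injEq _ _ _ _ ▸ h).1
  have hq : 2 * cfDen α (n+1) = cfDen α m := (Prod.mk.injEq _ _ _ _ ▸ h).2
  match m with
  | 0 =>
    have : cfDen α 0 = 1 := rfl
    have h1 := (den_one_le hα (n+1)).1
    omega
  | m + 1 =>
    have hdet := det_eq hα m
    have h1 := (den_one_le hα m).1
    rw [← hp, ← hq] at hdet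
    have h2 : (2:ℤ) ∣ 2 * cfNum α (n+1) * cfDen α m - cfNum α m * (2 * cfDen α (n+1)) :=
      ⟨cfNum α (n+1) * cfDen α m - cfNum α m * cfDen α (n+1), by ring⟩
    rw [hdet] at h2
    rcases Nat.even_or_odd m with he | ho
    · rw [Even.neg_one_pow he] at h2; norm_num at h2
    · rw [Odd.neg_one_pow ho] at h2; norm_num at h2


theorem psi2_nonneg (t : ℝ) : 0 ≤ psi2 α t := by
  apply Real.sInf_nonneg
  rintro x ⟨p, q, -, -, -, rfl⟩
  exact abs_nonneg _

theorem psi2_le (hα : Irrational α) (n : ℕ) :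
    psi2 α (2 * (cfDen α (n+1) : ℝ))
      ≤ 2 * (cfTail α (n + 2) * (cfDen α (n + 1) : ℝ) + (cfDen α n : ℝ))⁻¹ := by
  have hmem : (2 : ℝ) * (cfTail α (n + 2) * (cfDen α (n + 1) : ℝ) + (cfDen α n : ℝ))⁻¹
      ∈ { x : ℝ | ∃ p q : ℤ, 1 ≤ q ∧ (q : ℝ) ≤ 2 * (cfDen α (n+1) : ℝ) ∧
        (∀ m : ℕ, (p, q) ≠ (cfNum α m, cfDen α m)) ∧ x = |(q : ℝ) * α - (p : ℝ)| } := by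
    refine ⟨2 * cfNum α (n+1), 2 * cfDen α (n+1), ?_, ?_, double_not_convergent hα n, ?_⟩
    · have := (den_one_le hα (n+1)).1; omega
    · push_cast; linarith [(den_one_le hα (n+1)).1]
    · push_cast
      rw [show ((2:ℝ) * cfDen α (n+1)) * α - 2 * cfNum α (n+1)
          = 2 * ((cfDen α (n+1) : ℝ) * α - cfNum α (n+1)) by ring]
      rw [abs_mul, psi_formula hα n]
      norm_num
  apply csInf_le _ hmem
  refine ⟨0, ?_⟩
  rintro x ⟨p, q, -, -, -, rfl⟩
  exact abs_nonneg _


theorem sqrt2_facts : Real.sqrt 2 ^ 2 = 2 ∧ (1.4:ℝ) ≤ Real.sqrt 2 ∧ Real.sqrt 2 ≤ 1.5 := by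
  have hs : Real.sqrt 2 ^ 2 = 2 := Real.sq_sqrt (by norm_num)
  have h0 := Real.sqrt_nonneg 2
  refine ⟨hs, by nlinarith, by nlinarith⟩

theorem key_ineq {δ : ℝ} (hδ : 0 ≤ δ) :
    4 + (1 + (2 + 2*Real.sqrt 2 + δ)⁻¹)⁻¹ ≤ 2 + 2*Real.sqrt 2 + δ/25 := by
  obtain ⟨hs, hs1, hs2⟩ := sqrt2_facts
  set s := Real.sqrt 2
  have hW : 0 < 2 + 2*s + δ := by nlinarith
  have hW1 : 0 < 2 + 2*s + δ + 1 := by nlinarith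
  have hinv : (1 + (2 + 2*s + δ)⁻¹)⁻¹ = (2 + 2*s + δ) / (2 + 2*s + δ + 1) := by
    rw [inv_eq_one_div, inv_eq_one_div]
    field_simp
  rw [hinv]
  have hnum : 0 ≤ (2 + 2*s + δ/25 - 4) * (2 + 2*s + δ + 1) - (2 + 2*s + δ) := by
    nlinarith
  have hexp : (2 + 2*s + δ/25 - 4) - (2 + 2*s + δ) / (2 + 2*s + δ + 1)
      = ((2 + 2*s + δ/25 - 4) * (2 + 2*s + δ + 1) - (2 + 2*s + δ)) / (2 + 2*s + δ + 1) := by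
    field_simp
  have := div_nonneg hnum hW1.le
  linarith [hexp ▸ this]

theorem delta_pos (k : ℕ) : (0:ℝ) < 5 / 25 ^ k := by positivity

theorem delta_succ (k : ℕ) : (5:ℝ) / 25 ^ k / 25 = 5 / 25 ^ (k + 1) := by
  rw [pow_succ]; field_simp

theorem tail_bound (hα : Irrational α) (N : ℕ) (hN : ∀ m, N ≤ m → cfDigit α m ≤ 4) :
    ∀ k m, N ≤ m → cfTail α m ≤ 2 + 2*Real.sqrt 2 + 5/25^k := by
  obtain ⟨hs, hs1, hs2⟩ := sqrt2_facts
  intro k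
  induction k with
  | zero =>
    intro m hm
    have hd : (cfDigit α m : ℝ) ≤ 4 := by exact_mod_cast hN m hm
    have h1 : 1 < cfTail α (m + 1) := tail_one_lt hα m
    have hrec := tail_rec hα m
    have hinv : (cfTail α (m+1))⁻¹ ≤ 1 := by
      rw [inv_le_one_iff₀]; right; exact h1.le
    norm_num
    nlinarith
  | succ k ih =>
    intro m hm
    set δ := (5:ℝ)/25^k with hδdef
    have hδ : 0 < δ := delta_pos k
    have h2 : cfTail α (m+2) ≤ 2 + 2*Real.sqrt 2 + δ := ih (m+2) (by omega)
    have ht2pos : 0 < cfTail α (m+2) := tail_pos hα (m+1)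
    have hWpos : (0:ℝ) < 2 + 2*Real.sqrt 2 + δ := by nlinarith
    have hinv2 : (2 + 2*Real.sqrt 2 + δ)⁻¹ ≤ (cfTail α (m+2))⁻¹ :=
      inv_anti₀ ht2pos h2
    have hd1 : (1:ℝ) ≤ (cfDigit α (m+1) : ℝ) := by exact_mod_cast digit_one_le hα m
    have hlow : 1 + (2 + 2*Real.sqrt 2 + δ)⁻¹ ≤ cfTail α (m+1) := by
      have := tail_rec hα (m+1)
      rw [this]; push_cast; linarith
    have hlowpos : (0:ℝ) < 1 + (2 + 2*Real.sqrt 2 + δ)⁻¹ := by positivity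
    have hinv1 : (cfTail α (m+1))⁻¹ ≤ (1 + (2 + 2*Real.sqrt 2 + δ)⁻¹)⁻¹ :=
      inv_anti₀ hlowpos hlow
    have hd : (cfDigit α m : ℝ) ≤ 4 := by exact_mod_cast hN m hm
    have hrec := tail_rec hα m
    have hkey := key_ineq hδ.le
    calc cfTail α m = (cfDigit α m : ℝ) + (cfTail α (m+1))⁻¹ := hrec
      _ ≤ 4 + (1 + (2 + 2*Real.sqrt 2 + δ)⁻¹)⁻¹ := by linarith
      _ ≤ 2 + 2*Real.sqrt 2 + δ/25 := hkey
      _ = 2 + 2*Real.sqrt 2 + 5/25^(k+1) := by rw [hδdef, delta_succ]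

theorem denR (n : ℕ) : (cfDen α (n+2) : ℝ)
    = (cfDigit α (n+2) : ℝ) * cfDen α (n+1) + cfDen α n := by
  push_cast [show cfDen α (n+2) = cfDigit α (n + 2) * cfDen α (n + 1) + cfDen α n from rfl]
  ring

theorem den_ratio_bound (hα : Irrational α) (N : ℕ) (hN : ∀ m, N ≤ m → cfDigit α m ≤ 4) :
    ∀ k i, N + 2*k ≤ i →
      (cfDen α (i+2) : ℝ) ≤ (2 + 2*Real.sqrt 2 + 5/25^k) * cfDen α (i+1) := by
  obtain ⟨hs, hs1, hs2⟩ := sqrt2_facts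
  intro k
  induction k with
  | zero =>
    intro i hi
    have hd : (cfDigit α (i+2) : ℝ) ≤ 4 := by exact_mod_cast hN (i+2) (by omega)
    have hmono : (cfDen α i : ℝ) ≤ cfDen α (i+1) := by exact_mod_cast (den_one_le hα i).2
    have hpos : (1:ℝ) ≤ cfDen α (i+1) := by exact_mod_cast (den_one_le hα (i+1)).1
    rw [denR]
    norm_num
    nlinarith
  | succ k ih =>
    intro i hi
    obtain ⟨j, rfl⟩ : ∃ j, i = j + 2 := ⟨i - 2, by omega⟩
    set δ := (5:ℝ)/25^k with hδdef
    have hδ : 0 < δ := delta_pos k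
    have hW : (0:ℝ) < 2 + 2*Real.sqrt 2 + δ := by nlinarith
    have hIH : (cfDen α (j+2) : ℝ) ≤ (2 + 2*Real.sqrt 2 + δ) * cfDen α (j+1) :=
      ih j (by omega)
    have q1 : (1:ℝ) ≤ cfDen α (j+1) := by exact_mod_cast (den_one_le hα (j+1)).1
    have q2 : (1:ℝ) ≤ cfDen α (j+2) := by exact_mod_cast (den_one_le hα (j+2)).1
    have q3 : (1:ℝ) ≤ cfDen α (j+3) := by exact_mod_cast (den_one_le hα (j+3)).1
    have hd3 : (1:ℝ) ≤ (cfDigit α (j+3) : ℝ) := by exact_mod_cast digit_one_le hα (j+2)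
    have hd4 : (cfDigit α (j+4) : ℝ) ≤ 4 := by exact_mod_cast hN (j+4) (by omega)
    have hq1low : (2 + 2*Real.sqrt 2 + δ)⁻¹ * cfDen α (j+2) ≤ cfDen α (j+1) := by
      rw [inv_mul_le_iff₀ hW]; linarith
    have r1 : (1 + (2 + 2*Real.sqrt 2 + δ)⁻¹) * cfDen α (j+2) ≤ (cfDen α (j+3) : ℝ) := by
      have := denR (α := α) (j+1)
      rw [show j+1+2 = j+3 from rfl, show j+1+1 = j+2 from rfl] at this
      rw [this]
      nlinarith
    have hlowpos : (0:ℝ) < 1 + (2 + 2*Real.sqrt 2 + δ)⁻¹ := by positivity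
    have r1' : (cfDen α (j+2) : ℝ) ≤ (1 + (2 + 2*Real.sqrt 2 + δ)⁻¹)⁻¹ * cfDen α (j+3) := by
      rw [inv_mul_eq_div, le_div_iff₀ hlowpos]; linarith [r1]
    have hkey := key_ineq hδ.le
    have : (cfDen α (j+4) : ℝ) ≤ (4 + (1 + (2 + 2*Real.sqrt 2 + δ)⁻¹)⁻¹) * cfDen α (j+3) := by
      have hr := denR (α := α) (j+2)
      rw [show j+2+2 = j+4 from rfl, show j+2+1 = j+3 from rfl] at hr
      rw [hr]
      nlinarith
    calc (cfDen α (j+2+2) : ℝ) ≤ (4 + (1 + (2 + 2*Real.sqrt 2 + δ)⁻¹)⁻¹) * cfDen α (j+3) := this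
      _ ≤ (2 + 2*Real.sqrt 2 + δ/25) * cfDen α (j+3) := by
          apply mul_le_mul_of_nonneg_right hkey; linarith
      _ = (2 + 2*Real.sqrt 2 + 5/25^(k+1)) * cfDen α (j+2+1) := by
          rw [hδdef, delta_succ]



theorem final_ineq {δ : ℝ} (hδ : 0 ≤ δ) :
    4 * (4 + 2*(2 + 2*Real.sqrt 2 + δ)⁻¹)⁻¹ ≤ 4/(3 + Real.sqrt 2) + δ := by
  obtain ⟨hs, hs1, hs2⟩ := sqrt2_facts
  set s := Real.sqrt 2
  have hW : (0:ℝ) < 2 + 2*s + δ := by nlinarith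
  have h3s : (0:ℝ) < 3 + s := by nlinarith
  have hA : (0:ℝ) < 4 + 2*(2 + 2*s + δ)⁻¹ := by positivity
  have hden : (0:ℝ) < 4*(2 + 2*s + δ) + 2 := by nlinarith
  have h1 : (4 + 2*(2 + 2*s + δ)⁻¹) = (4*(2 + 2*s + δ) + 2)/(2 + 2*s + δ) := by
    field_simp
  rw [h1, inv_div, mul_div_assoc']
  rw [div_le_iff₀ hden]
  have expand : (4/(3+s) + δ) * (4*(2 + 2*s + δ) + 2) - 4 * (2 + 2*s + δ)
      = (4*(4*(2+2*s+δ)+2) + δ*(3+s)*(4*(2+2*s+δ)+2) - 4*(2+2*s+δ)*(3+s)) / (3+s) := by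
    field_simp
  have hnum : (0:ℝ) ≤ 4*(4*(2+2*s+δ)+2) + δ*(3+s)*(4*(2+2*s+δ)+2) - 4*(2+2*s+δ)*(3+s) := by
    nlinarith [mul_nonneg hδ (by nlinarith : (0:ℝ) ≤ s), mul_nonneg hδ hδ,
      mul_nonneg (mul_nonneg hδ hδ) (by nlinarith : (0:ℝ) ≤ s)]
  have := div_nonneg hnum h3s.le
  linarith [expand ▸ this]

theorem kConst_le (hα : Irrational α) (N : ℕ) (hN : ∀ m, N ≤ m → cfDigit α m ≤ 4)
    (h4 : ∃ᶠ n in atTop, cfDigit α n = 4) (k : ℕ) :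
    kConst α ≤ 4 / (3 + Real.sqrt 2) + 5/25^k := by
  obtain ⟨hs, hs1, hs2⟩ := sqrt2_facts
  have hbdd : IsBoundedUnder (· ≥ ·) atTop (fun t : ℝ => t * psi2 α t) := by
    refine ⟨0, ?_⟩
    rw [eventually_map]
    filter_upwards [eventually_ge_atTop (0:ℝ)] with t ht
    exact mul_nonneg ht (psi2_nonneg _)
  refine liminf_le_of_frequently_le ?_ hbdd
  rw [frequently_atTop]
  intro T
  obtain ⟨M, hM⟩ := exists_nat_ge T
  obtain ⟨m, hm, hm4⟩ := frequently_atTop.mp h4 (N + 2*k + 3 + M)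
  obtain ⟨n, rfl⟩ : ∃ n, m = n + 2 := ⟨m - 2, by omega⟩
  set W : ℝ := 2 + 2*Real.sqrt 2 + 5/25^k with hWdef
  have hδ : (0:ℝ) < 5/25^k := delta_pos k
  have hW : (0:ℝ) < W := by rw [hWdef]; nlinarith
  have hq1 : (1:ℝ) ≤ (cfDen α (n+1) : ℝ) := by exact_mod_cast (den_one_le hα (n+1)).1
  refine ⟨2 * (cfDen α (n+1) : ℝ), ?_, ?_⟩
  · have hge : ((n:ℤ) : ℝ) ≤ (cfDen α (n+1) : ℝ) := by exact_mod_cast den_ge hα n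
    have hMn : ((M:ℕ) : ℝ) ≤ ((n:ℤ) : ℝ) := by
      have : (M:ℤ) ≤ (n:ℤ) := by exact_mod_cast (by omega : M ≤ n)
      exact_mod_cast this
    linarith
  · have hψ := psi2_le hα n
    have h_t3 : cfTail α (n+3) ≤ W := tail_bound hα N hN k (n+3) (by omega)
    have h_t3pos : 0 < cfTail α (n+3) := tail_pos hα (n+2)
    have h_tinv : W⁻¹ ≤ (cfTail α (n+3))⁻¹ := inv_anti₀ h_t3pos h_t3
    have h_t2 : cfTail α (n+2) = 4 + (cfTail α (n+3))⁻¹ := by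
      have := tail_rec hα (n+2)
      rw [hm4] at this
      push_cast at this
      exact this
    obtain ⟨i, rfl⟩ : ∃ i, n = i + 1 := ⟨n - 1, by omega⟩
    have hr : (cfDen α (i+2) : ℝ) ≤ W * cfDen α (i+1) :=
      den_ratio_bound hα N hN k i (by omega)
    have hqn : W⁻¹ * (cfDen α (i+2) : ℝ) ≤ (cfDen α (i+1) : ℝ) := by
      rw [inv_mul_le_iff₀ hW]; linarith
    set q : ℝ := (cfDen α (i+1+1) : ℝ) with hqdef
    set D : ℝ := cfTail α (i+1+2) * q + (cfDen α (i+1) : ℝ) with hDdef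
    have hq0 : (0:ℝ) < q := by rw [hqdef]; linarith
    have hDlow : (4 + 2*W⁻¹) * q ≤ D := by
      rw [hDdef, h_t2]
      have : W⁻¹ * q ≤ (cfDen α (i+1) : ℝ) := hqn
      nlinarith [mul_le_mul_of_nonneg_right h_tinv hq0.le]
    have hApos : (0:ℝ) < 4 + 2*W⁻¹ := by positivity
    have hDpos : (0:ℝ) < D := lt_of_lt_of_le (by positivity) hDlow
    have hDinv : D⁻¹ ≤ ((4 + 2*W⁻¹) * q)⁻¹ := inv_anti₀ (by positivity) hDlow
    have step1 : 2 * q * psi2 α (2 * q) ≤ 2 * q * (2 * D⁻¹) :=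
      mul_le_mul_of_nonneg_left hψ (by positivity)
    have step2 : 2 * q * (2 * D⁻¹) ≤ 2 * q * (2 * ((4 + 2*W⁻¹) * q)⁻¹) := by
      apply mul_le_mul_of_nonneg_left _ (by positivity)
      linarith
    have step3 : 2 * q * (2 * ((4 + 2*W⁻¹) * q)⁻¹) = 4 * (4 + 2*W⁻¹)⁻¹ := by
      field_simp
      ring
    have step4 : 4 * (4 + 2*W⁻¹)⁻¹ ≤ 4/(3 + Real.sqrt 2) + 5/25^k := by
      rw [hWdef]
      exact final_ineq hδ.le
    calc 2 * q * psi2 α (2 * q) ≤ 2 * q * (2 * D⁻¹) := step1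
      _ ≤ 2 * q * (2 * ((4 + 2*W⁻¹) * q)⁻¹) := step2
      _ = 4 * (4 + 2*W⁻¹)⁻¹ := step3
      _ ≤ 4/(3 + Real.sqrt 2) + 5/25^k := step4


/-- If `α` is irrational, equivalent neither to `(1+√5)/2` nor to `(1+√17)/2`,
`aₙ ≤ 4` for all sufficiently large `n` and `aₙ = 4` for infinitely many `n`,
then `𝔨(α) ≤ 4/(3+√2)`. -/
theorem stmt_12 (α : ℝ) (hα : Irrational α)
    (h5 : ¬ CFEquiv α ((1 + Real.sqrt 5) / 2))
    (h17 : ¬ CFEquiv α ((1 + Real.sqrt 17) / 2))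
    (hbd : ∀ᶠ n in atTop, cfDigit α n ≤ 4)
    (h4 : ∃ᶠ n in atTop, cfDigit α n = 4) :
    kConst α ≤ 4 / (3 + Real.sqrt 2) := by
  obtain ⟨N, hN⟩ := eventually_atTop.mp hbd
  by_contra hcon
  push_neg at hcon
  set ε : ℝ := kConst α - 4 / (3 + Real.sqrt 2) with hε
  have hεpos : 0 < ε := by rw [hε]; linarith
  obtain ⟨k, hk⟩ := pow_unbounded_of_one_lt (ε⁻¹ * 5) (by norm_num : (1:ℝ) < 25)
  have h5' : (5:ℝ)/25^k < ε := by
    rw [div_lt_iff₀ (by positivity)]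
    calc (5:ℝ) = ε * (ε⁻¹ * 5) := by field_simp
      _ < ε * 25^k := by exact mul_lt_mul_of_pos_left hk hεpos
  have := kConst_le hα N hN h4 k
  rw [hε] at h5'
  linarith
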